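/- Let X_1, …, X_d be n-by-n real matrices with ‖Σ_i X_i ⊗ X_i‖ < 1 for a consistent matrix norm, and let P = [(I − Σ_i X_i ⊗ X_i)^{-1}]^ψ. Then an n-by-n matrix Z lies in the unital subalgebra of M_n(ℝ) generated by X_1, …, X_d if and only if vec Z lies in the range of P. -/

import Mathlib

open Matrix Kronecker

/-- `_root_.vec` stacks the columns of a matrix into a single column vector. -/
def vec {n : ℕ} (A : Matrix (Fin n) (Fin n) ℝ) : Fin n × Fin n → ℝ :=
  fun p => A p.1 p.2

/-- The ψ-involution on n²-by-n² matrices. -/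
def psi {n : ℕ} (A : Matrix (Fin n × Fin n) (Fin n × Fin n) ℝ) :
    Matrix (Fin n × Fin n) (Fin n × Fin n) ℝ :=
  fun p q => A (p.1, q.1) (p.2, q.2)

noncomputable def vecE {n : ℕ} : Matrix (Fin n) (Fin n) ℝ ≃ₗ[ℝ] (Fin n × Fin n → ℝ) where
  toFun := _root_.vec
  invFun v := Matrix.of fun i j => v (i, j)
  map_add' _ _ := rfl
  map_smul' _ _ := rfl
  left_inv _ := rfl
  right_inv _ := rfl

def psiL {n : ℕ} : Matrix (Fin n × Fin n) (Fin n × Fin n) ℝ →ₗ[ℝ]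
    Matrix (Fin n × Fin n) (Fin n × Fin n) ℝ where
  toFun := psi
  map_add' _ _ := rfl
  map_smul' _ _ := rfl

lemma psi_kron_mulVec {n : ℕ} (A B : Matrix (Fin n) (Fin n) ℝ) (u : Fin n × Fin n → ℝ) :
    psi (A ⊗ₖ B) *ᵥ u = (_root_.vec B ⬝ᵥ u) • _root_.vec A := by
  funext p
  simp only [psi, mulVec, dotProduct, kroneckerMap_apply, _root_.vec, Pi.smul_apply, smul_eq_mul]
  rw [Finset.sum_mul]
  exact Finset.sum_congr rfl fun q _ => by ring

noncomputable def wprod {n d : ℕ} (X : Fin d → Matrix (Fin n) (Fin n) ℝ)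
    (l : List (Fin d)) : Matrix (Fin n) (Fin n) ℝ :=
  (l.map X).prod

lemma wprod_cons {n d : ℕ} (X : Fin d → Matrix (Fin n) (Fin n) ℝ) (i : Fin d)
    (l : List (Fin d)) : wprod X (i :: l) = X i * wprod X l := by
  simp [wprod]

lemma pow_S_eq {n d : ℕ} (X : Fin d → Matrix (Fin n) (Fin n) ℝ) (k : ℕ) :
    (∑ i, X i ⊗ₖ X i) ^ k =
      ∑ w : Fin k → Fin d, wprod X (List.ofFn w) ⊗ₖ wprod X (List.ofFn w) := by
  induction k with
  | zero => simp [wprod]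
  | succ k ih =>
      rw [pow_succ', ih, Finset.sum_mul_sum]
      rw [← Equiv.sum_comp (Fin.consEquiv (fun _ : Fin (k+1) => Fin d))
        (fun w => wprod X (List.ofFn w) ⊗ₖ wprod X (List.ofFn w))]
      rw [Fintype.sum_prod_type]
      refine Finset.sum_congr rfl fun i _ => Finset.sum_congr rfl fun w _ => ?_
      have hc : wprod X (List.ofFn ((Fin.consEquiv (fun _ : Fin (k+1) => Fin d)) (i, w)))
          = X i * wprod X (List.ofFn w) := by
        show wprod X (List.ofFn (Fin.cons i w)) = _
        rw [List.ofFn_succ]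
        simp [wprod_cons]
      rw [hc, Matrix.mul_kronecker_mul]

lemma entry_bound {m : Type*} [Fintype m] [DecidableEq m]
    (ν : Matrix m m ℝ → ℝ)
    (hnonneg : ∀ A, 0 ≤ ν A)
    (hdef : ∀ A, ν A = 0 → A = 0)
    (hsmul : ∀ (c : ℝ) A, ν (c • A) = |c| * ν A)
    (hsubmul : ∀ A B, ν (A * B) ≤ ν A * ν B) :
    ∃ C : ℝ, 0 ≤ C ∧ ∀ (M : Matrix m m ℝ) (p q : m), |M p q| ≤ C * ν M := by
  classical
  have hEpos : ∀ a b : m, 0 < ν (Matrix.single a b (1:ℝ)) := by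
    intro a b
    rcases lt_or_eq_of_le (hnonneg (Matrix.single a b (1:ℝ))) with h | h
    · exact h
    · exfalso
      have := hdef _ h.symm
      have h1 : (Matrix.single a b (1:ℝ)) a b = 1 := by simp [Matrix.single]
      rw [this] at h1
      simp at h1
  set c : m → m → ℝ := fun a b =>
    ν (Matrix.single a a (1:ℝ)) * ν (Matrix.single b b (1:ℝ)) / ν (Matrix.single a b (1:ℝ))
    with hc
  have hcnonneg : ∀ a b, 0 ≤ c a b := fun a b =>
    div_nonneg (mul_nonneg (hnonneg _) (hnonneg _)) (hnonneg _)
  have hkey : ∀ (M : Matrix m m ℝ) (p q : m), |M p q| ≤ c p q * ν M := by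
    intro M p q
    have hid : Matrix.single p p (1:ℝ) * M * Matrix.single q q (1:ℝ)
        = M p q • Matrix.single p q (1:ℝ) := by
      ext i j
      by_cases hip : i = p
      · by_cases hjq : j = q
        · subst hip; subst hjq
          rw [Matrix.mul_single_apply_same,
            Matrix.single_mul_apply_same]
          simp [Matrix.single]
        · rw [Matrix.mul_single_apply_of_ne _ _ _ _ _ hjq]
          simp only [Matrix.smul_apply, Matrix.single, of_apply, smul_eq_mul]
          rw [if_neg (fun h => hjq h.2.symm)]
          simp
      · rw [Matrix.mul_assoc, Matrix.single_mul_apply_of_ne _ _ _ _ _ hip]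
        simp only [Matrix.smul_apply, Matrix.single, of_apply, smul_eq_mul]
        rw [if_neg (fun h => hip h.1.symm)]
        simp
    have h1 : |M p q| * ν (Matrix.single p q (1:ℝ))
        ≤ ν (Matrix.single p p (1:ℝ)) * ν M * ν (Matrix.single q q (1:ℝ)) := by
      rw [← hsmul, ← hid]
      calc ν (Matrix.single p p (1:ℝ) * M * Matrix.single q q (1:ℝ))
          ≤ ν (Matrix.single p p (1:ℝ) * M) * ν (Matrix.single q q (1:ℝ)) := hsubmul _ _
        _ ≤ ν (Matrix.single p p (1:ℝ)) * ν M * ν (Matrix.single q q (1:ℝ)) := by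
            apply mul_le_mul_of_nonneg_right (hsubmul _ _) (hnonneg _)
    rw [hc]
    rw [div_mul_eq_mul_div, le_div_iff₀ (hEpos p q)]
    calc |M p q| * ν (Matrix.single p q 1) ≤ _ := h1
      _ = ν (Matrix.single p p 1) * ν (Matrix.single q q 1) * ν M := by ring
  refine ⟨∑ a : m, ∑ b : m, c a b, Finset.sum_nonneg fun a _ =>
    Finset.sum_nonneg fun b _ => hcnonneg a b, fun M p q => ?_⟩
  refine (hkey M p q).trans (mul_le_mul_of_nonneg_right ?_ (hnonneg M))
  calc c p q ≤ ∑ b : m, c p b :=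
        Finset.single_le_sum (fun b _ => hcnonneg p b) (Finset.mem_univ q)
    _ ≤ ∑ a : m, ∑ b : m, c a b :=
        Finset.single_le_sum (fun a _ => Finset.sum_nonneg fun b _ => hcnonneg a b)
          (Finset.mem_univ p)

open RealInnerProductSpace in
lemma range_mulVecLin_eq_span {m : Type*} [Fintype m] [DecidableEq m]
    (P : Matrix m m ℝ) (s : Set (m → ℝ))
    (hsym : Pᵀ = P)
    (h1 : ∀ u y : m → ℝ, (∀ g ∈ s, g ⬝ᵥ y = 0) → y ⬝ᵥ (P *ᵥ u) = 0)
    (h2 : ∀ u : m → ℝ, P *ᵥ u = 0 → ∀ g ∈ s, g ⬝ᵥ u = 0) :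
    LinearMap.range P.mulVecLin = Submodule.span ℝ s := by
  classical
  set e : EuclideanSpace ℝ m ≃ₗ[ℝ] (m → ℝ) := WithLp.linearEquiv 2 ℝ (m → ℝ) with he
  have hinner : ∀ x y : EuclideanSpace ℝ m, ⟪x, y⟫ = (e x) ⬝ᵥ (e y) := by
    intro x y
    simp [PiLp.inner_apply, RCLike.inner_apply, dotProduct, he, mul_comm]
  have hswap : ∀ a b : m → ℝ, (P *ᵥ a) ⬝ᵥ b = a ⬝ᵥ (P *ᵥ b) := by
    intro a b
    rw [dotProduct_comm, Matrix.dotProduct_mulVec, ← Matrix.mulVec_transpose,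
      hsym, dotProduct_comm]
  set T : EuclideanSpace ℝ m →ₗ[ℝ] EuclideanSpace ℝ m :=
    e.symm.toLinearMap ∘ₗ P.mulVecLin ∘ₗ e.toLinearMap with hT
  have hTapp : ∀ x : EuclideanSpace ℝ m, e (T x) = P *ᵥ (e x) := by
    intro x
    simp [hT, Matrix.mulVecLin_apply]
  set Vs : Submodule ℝ (m → ℝ) := Submodule.span ℝ s with hVs
  set Ve : Submodule ℝ (EuclideanSpace ℝ m) := Vs.comap e.toLinearMap with hVe
  have hVemem : ∀ x : EuclideanSpace ℝ m, x ∈ Ve ↔ e x ∈ Vs := fun _ => Iff.rfl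
  have hdotspan : ∀ (y : m → ℝ), (∀ g ∈ s, g ⬝ᵥ y = 0) → ∀ v ∈ Vs, v ⬝ᵥ y = 0 := by
    intro y hy v hv
    induction hv using Submodule.span_induction with
    | mem x hx => exact hy x hx
    | zero => simp
    | add a b _ _ ha hb => rw [add_dotProduct, ha, hb, add_zero]
    | smul c a _ ha => rw [smul_dotProduct, ha, smul_zero]
  apply le_antisymm
  · rintro v ⟨u, rfl⟩
    rw [Matrix.mulVecLin_apply]
    have hmem : e.symm (P *ᵥ u) ∈ Ve → P *ᵥ u ∈ Vs := by
      intro h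
      rw [hVemem] at h
      simpa using h
    apply hmem
    rw [← Submodule.orthogonal_orthogonal Ve, Submodule.mem_orthogonal]
    intro y hy
    rw [hinner]
    simp only [LinearEquiv.apply_symm_apply]
    apply h1 u (e y)
    intro g hg
    have hgV : e.symm g ∈ Ve := by
      rw [hVemem]
      simpa using Submodule.subset_span hg
    have h := (Submodule.mem_orthogonal Ve y).mp hy (e.symm g) hgV
    rw [hinner] at h
    simpa using h
  · have hsub : Ve ≤ LinearMap.range T := by
      rw [← Submodule.orthogonal_orthogonal (LinearMap.range T)]
      intro x hx
      rw [Submodule.mem_orthogonal]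
      intro y hy
      have hTy : P *ᵥ (e y) = 0 := by
        funext p
        have h := (Submodule.mem_orthogonal _ y).mp hy (T (e.symm (Pi.single p 1)))
          ⟨_, rfl⟩
        rw [hinner, hTapp] at h
        simp only [LinearEquiv.apply_symm_apply] at h
        rw [hswap, single_dotProduct, one_mul] at h
        exact h
      have hgens := h2 (e y) hTy
      rw [hinner, dotProduct_comm]
      exact hdotspan (e y) hgens (e x) ((hVemem x).mp hx)
    intro v hv
    obtain ⟨w, hw⟩ := hsub (show e.symm v ∈ Ve by rw [hVemem]; simpa using hv)
    refine ⟨e w, ?_⟩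
    rw [Matrix.mulVecLin_apply, ← hTapp, hw]
    simp

theorem mem_algebra_iff_vec_mem_range {n d : ℕ} (X : Fin d → Matrix (Fin n) (Fin n) ℝ)
    (ν : Matrix (Fin n × Fin n) (Fin n × Fin n) ℝ → ℝ)
    (hnonneg : ∀ A, 0 ≤ ν A)
    (hdef : ∀ A, ν A = 0 → A = 0)
    (htri : ∀ A B, ν (A + B) ≤ ν A + ν B)
    (hsmul : ∀ (c : ℝ) A, ν (c • A) = |c| * ν A)
    (hsubmul : ∀ A B, ν (A * B) ≤ ν A * ν B)
    (hlt : ν (∑ i, X i ⊗ₖ X i) < 1) :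
    ∀ Z : Matrix (Fin n) (Fin n) ℝ,
      Z ∈ Algebra.adjoin ℝ (Set.range X) ↔
        _root_.vec Z ∈ LinearMap.range (psi (1 - ∑ i, X i ⊗ₖ X i)⁻¹).mulVecLin := by
  classical
  intro Z
  obtain ⟨C, hC0, hCb⟩ := entry_bound ν hnonneg hdef hsmul hsubmul
  set S : Matrix (Fin n × Fin n) (Fin n × Fin n) ℝ := ∑ i, X i ⊗ₖ X i with hSdef
  have hSnn : 0 ≤ ν S := hnonneg S
  -- geometric bound
  have hgeom : ∀ (N : ℕ) (B : Matrix (Fin n × Fin n) (Fin n × Fin n) ℝ),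
      ν (S ^ N * B) ≤ ν S ^ N * ν B := by
    intro N
    induction N with
    | zero => intro B; simp
    | succ N ih =>
        intro B
        have h1 : S ^ (N+1) * B = S * (S ^ N * B) := by rw [pow_succ', Matrix.mul_assoc]
        rw [h1]
        calc ν (S * (S ^ N * B)) ≤ ν S * ν (S ^ N * B) := hsubmul _ _
          _ ≤ ν S * (ν S ^ N * ν B) := by
              exact mul_le_mul_of_nonneg_left (ih B) hSnn
          _ = ν S ^ (N+1) * ν B := by ring
  -- scalar limit lemma
  have hlim : ∀ (x K : ℝ) (N₀ : ℕ), (∀ N, N₀ ≤ N → x ≤ K * ν S ^ N) → x ≤ 0 := by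
    intro x K N₀ h
    have ht : Filter.Tendsto (fun N : ℕ => K * ν S ^ N) Filter.atTop (nhds 0) := by
      have := (tendsto_pow_atTop_nhds_zero_of_lt_one hSnn hlt).const_mul K
      simpa using this
    exact ge_of_tendsto ht (Filter.eventually_atTop.mpr ⟨N₀, h⟩)
  -- invertibility
  have hdet : IsUnit (1 - S).det := by
    rw [isUnit_iff_ne_zero]
    intro h0
    obtain ⟨v, hv0, hv⟩ := Matrix.exists_mulVec_eq_zero_iff.mpr h0
    have hSv : S *ᵥ v = v := by
      rw [Matrix.sub_mulVec, Matrix.one_mulVec] at hv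
      exact (sub_eq_zero.mp hv).symm
    have hSN : ∀ N : ℕ, S ^ N *ᵥ v = v := by
      intro N
      induction N with
      | zero => simp [Matrix.one_mulVec]
      | succ N ih => rw [pow_succ', ← Matrix.mulVec_mulVec, ih, hSv]
    obtain ⟨p, hp⟩ := Function.ne_iff.mp hv0
    have hp : v p ≠ 0 := by simpa using hp
    have hpw : ∀ N : ℕ, ν (S ^ N) ≤ ν S ^ N * ν 1 := by
      intro N
      have := hgeom N 1
      rwa [Matrix.mul_one] at this
    have key : ∀ N : ℕ, |v p| ≤ (C * ν 1 * ∑ q, |v q|) * ν S ^ N := by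
      intro N
      have h1 : v p = ∑ q, (S ^ N) p q * v q := by
        conv_lhs => rw [← hSN N]
        simp [Matrix.mulVec, dotProduct]
      rw [h1]
      calc |∑ q, (S ^ N) p q * v q| ≤ ∑ q, |(S ^ N) p q * v q| :=
            Finset.abs_sum_le_sum_abs _ _
        _ ≤ ∑ q, (C * (ν S ^ N * ν 1)) * |v q| := by
            refine Finset.sum_le_sum fun q _ => ?_
            rw [abs_mul]
            refine mul_le_mul_of_nonneg_right ?_ (abs_nonneg _)
            exact (hCb _ p q).trans (mul_le_mul_of_nonneg_left (hpw N) hC0)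
        _ = (C * ν 1 * ∑ q, |v q|) * ν S ^ N := by
            rw [← Finset.mul_sum]; ring
    have := hlim (|v p|) (C * ν 1 * ∑ q, |v q|) 0 (fun N _ => key N)
    exact hp (abs_eq_zero.mp (le_antisymm this (abs_nonneg _)))
  set Q : Matrix (Fin n × Fin n) (Fin n × Fin n) ℝ := (1 - S)⁻¹ with hQdef
  have hQl : (1 - S) * Q = 1 := Matrix.mul_nonsing_inv _ hdet
  have hQr : Q * (1 - S) = 1 := Matrix.nonsing_inv_mul _ hdet
  have hQrec : Q = 1 + S * Q := by
    have h := hQl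
    rw [Matrix.sub_mul, Matrix.one_mul] at h
    exact eq_add_of_sub_eq h
  have htel : ∀ N : ℕ, Q = (∑ k ∈ Finset.range N, S ^ k) + S ^ N * Q := by
    intro N
    induction N with
    | zero => simp
    | succ N ih =>
        rw [Finset.sum_range_succ]
        calc Q = (∑ k ∈ Finset.range N, S ^ k) + S ^ N * Q := ih
          _ = (∑ k ∈ Finset.range N, S ^ k) + S ^ N * (1 + S * Q) := by rw [← hQrec]
          _ = (∑ k ∈ Finset.range N, S ^ k) + S ^ N + S ^ (N+1) * Q := by
              rw [Matrix.mul_add, Matrix.mul_one, pow_succ, Matrix.mul_assoc, add_assoc]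
          _ = _ := by abel
  -- bound on the quadratic form of psi M
  have hpsibound : ∀ (M : Matrix (Fin n × Fin n) (Fin n × Fin n) ℝ)
      (u y : Fin n × Fin n → ℝ),
      |y ⬝ᵥ (psi M *ᵥ u)| ≤ (C * (∑ p, |y p|) * (∑ p, |u p|)) * ν M := by
    intro M u y
    have hd : y ⬝ᵥ (psi M *ᵥ u) = ∑ p, y p * (psi M *ᵥ u) p := rfl
    rw [hd]
    calc |∑ p, y p * (psi M *ᵥ u) p| ≤ ∑ p, |y p * (psi M *ᵥ u) p| :=
          Finset.abs_sum_le_sum_abs _ _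
      _ ≤ ∑ p, |y p| * ((C * ν M) * ∑ q, |u q|) := by
          refine Finset.sum_le_sum fun p _ => ?_
          rw [abs_mul]
          refine mul_le_mul_of_nonneg_left ?_ (abs_nonneg _)
          have h2 : (psi M *ᵥ u) p = ∑ q, psi M p q * u q := rfl
          rw [h2]
          calc |∑ q, psi M p q * u q| ≤ ∑ q, |psi M p q * u q| :=
                Finset.abs_sum_le_sum_abs _ _
            _ ≤ ∑ q, (C * ν M) * |u q| := by
                refine Finset.sum_le_sum fun q _ => ?_
                rw [abs_mul]
                exact mul_le_mul_of_nonneg_right (hCb M (p.1, q.1) (p.2, q.2))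
                  (abs_nonneg _)
            _ = (C * ν M) * ∑ q, |u q| := by rw [Finset.mul_sum]
      _ = (C * (∑ p, |y p|) * (∑ p, |u p|)) * ν M := by
          rw [← Finset.sum_mul]; ring
  have hpsisum : ∀ {ι : Type} (s : Finset ι)
      (f : ι → Matrix (Fin n × Fin n) (Fin n × Fin n) ℝ) (u y : Fin n × Fin n → ℝ),
      y ⬝ᵥ (psi (∑ k ∈ s, f k) *ᵥ u) = ∑ k ∈ s, y ⬝ᵥ (psi (f k) *ᵥ u) := by
    intro ι s f u y
    induction s using Finset.induction_on with
    | empty =>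
        simp [show psi (0 : Matrix (Fin n × Fin n) (Fin n × Fin n) ℝ) = 0 from rfl]
    | insert _ _ hm ih =>
        rw [Finset.sum_insert hm, Finset.sum_insert hm,
          show ∀ A B : Matrix (Fin n × Fin n) (Fin n × Fin n) ℝ,
            psi (A + B) = psi A + psi B from fun _ _ => rfl,
          Matrix.add_mulVec, dotProduct_add, ih]
  -- expansion of the quadratic form
  have hTexp : ∀ (N : ℕ) (u y : Fin n × Fin n → ℝ),
      y ⬝ᵥ (psi Q *ᵥ u) =
        (∑ k ∈ Finset.range N, ∑ w : Fin k → Fin d,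
          (_root_.vec (wprod X (List.ofFn w)) ⬝ᵥ y) * (_root_.vec (wprod X (List.ofFn w)) ⬝ᵥ u))
        + y ⬝ᵥ (psi (S ^ N * Q) *ᵥ u) := by
    intro N u y
    conv_lhs => rw [htel N]
    rw [show psi ((∑ k ∈ Finset.range N, S ^ k) + S ^ N * Q)
        = psi (∑ k ∈ Finset.range N, S ^ k) + psi (S ^ N * Q) from rfl,
      Matrix.add_mulVec, dotProduct_add]
    congr 1
    rw [hpsisum]
    refine Finset.sum_congr rfl fun k _ => ?_
    rw [pow_S_eq X k, hpsisum]
    refine Finset.sum_congr rfl fun w _ => ?_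
    rw [psi_kron_mulVec, dotProduct_smul, smul_eq_mul,
      dotProduct_comm y, mul_comm]
  -- F1
  have hF1 : ∀ u y : Fin n × Fin n → ℝ,
      (∀ l : List (Fin d), _root_.vec (wprod X l) ⬝ᵥ y = 0) → y ⬝ᵥ (psi Q *ᵥ u) = 0 := by
    intro u y hy
    have habs : ∀ N : ℕ, |y ⬝ᵥ (psi Q *ᵥ u)|
        ≤ ((C * (∑ p, |y p|) * (∑ p, |u p|)) * ν Q) * ν S ^ N := by
      intro N
      rw [hTexp N u y]
      have h0 : (∑ k ∈ Finset.range N, ∑ w : Fin k → Fin d,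
          (_root_.vec (wprod X (List.ofFn w)) ⬝ᵥ y) * (_root_.vec (wprod X (List.ofFn w)) ⬝ᵥ u)) = 0 :=
        Finset.sum_eq_zero fun k _ => Finset.sum_eq_zero fun w _ => by
          rw [hy, zero_mul]
      rw [h0, zero_add]
      calc |y ⬝ᵥ (psi (S ^ N * Q) *ᵥ u)|
          ≤ (C * (∑ p, |y p|) * (∑ p, |u p|)) * ν (S ^ N * Q) := hpsibound _ _ _
        _ ≤ (C * (∑ p, |y p|) * (∑ p, |u p|)) * (ν S ^ N * ν Q) := by
            refine mul_le_mul_of_nonneg_left (hgeom N Q) ?_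
            have h1 : (0:ℝ) ≤ ∑ p, |y p| := Finset.sum_nonneg fun p _ => abs_nonneg _
            have h2 : (0:ℝ) ≤ ∑ p, |u p| := Finset.sum_nonneg fun p _ => abs_nonneg _
            positivity
        _ = ((C * (∑ p, |y p|) * (∑ p, |u p|)) * ν Q) * ν S ^ N := by ring
    have h := hlim _ _ 0 (fun N _ => habs N)
    exact abs_eq_zero.mp (le_antisymm h (abs_nonneg _))
  -- F2
  have hF2 : ∀ u : Fin n × Fin n → ℝ, psi Q *ᵥ u = 0 →
      ∀ l : List (Fin d), _root_.vec (wprod X l) ⬝ᵥ u = 0 := by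
    intro u hu l
    set x := _root_.vec (wprod X l) ⬝ᵥ u with hx
    have key : ∀ N : ℕ, l.length + 1 ≤ N →
        x * x ≤ ((C * (∑ p, |u p|) * (∑ p, |u p|)) * ν Q) * ν S ^ N := by
      intro N hN
      have he := hTexp N u u
      rw [hu, dotProduct_zero] at he
      have hterm : ∀ (k : ℕ) (w : Fin k → Fin d), (0:ℝ) ≤
          (_root_.vec (wprod X (List.ofFn w)) ⬝ᵥ u) * (_root_.vec (wprod X (List.ofFn w)) ⬝ᵥ u) :=
        fun k w => mul_self_nonneg _
      have hsingle : x * x ≤ ∑ k ∈ Finset.range N, ∑ w : Fin k → Fin d,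
          (_root_.vec (wprod X (List.ofFn w)) ⬝ᵥ u) * (_root_.vec (wprod X (List.ofFn w)) ⬝ᵥ u) := by
        have h1 : x * x ≤ ∑ w : Fin l.length → Fin d,
            (_root_.vec (wprod X (List.ofFn w)) ⬝ᵥ u) * (_root_.vec (wprod X (List.ofFn w)) ⬝ᵥ u) := by
          have := Finset.single_le_sum (f := fun w : Fin l.length → Fin d =>
            (_root_.vec (wprod X (List.ofFn w)) ⬝ᵥ u) * (_root_.vec (wprod X (List.ofFn w)) ⬝ᵥ u))
            (fun w _ => hterm _ w) (Finset.mem_univ l.get)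
          simpa only [List.ofFn_get] using this
        refine h1.trans ?_
        exact Finset.single_le_sum (f := fun k => ∑ w : Fin k → Fin d,
            (_root_.vec (wprod X (List.ofFn w)) ⬝ᵥ u) * (_root_.vec (wprod X (List.ofFn w)) ⬝ᵥ u))
          (fun k _ => Finset.sum_nonneg fun w _ => hterm _ w)
          (Finset.mem_range.mpr hN)
      have hneg : x * x ≤ -(u ⬝ᵥ (psi (S ^ N * Q) *ᵥ u)) := by linarith [hsingle, he]
      calc x * x ≤ |u ⬝ᵥ (psi (S ^ N * Q) *ᵥ u)| := hneg.trans (neg_le_abs _)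
        _ ≤ (C * (∑ p, |u p|) * (∑ p, |u p|)) * ν (S ^ N * Q) := hpsibound _ _ _
        _ ≤ ((C * (∑ p, |u p|) * (∑ p, |u p|)) * ν Q) * ν S ^ N := by
            have h2 : (0:ℝ) ≤ ∑ p, |u p| := Finset.sum_nonneg fun p _ => abs_nonneg _
            calc (C * (∑ p, |u p|) * (∑ p, |u p|)) * ν (S ^ N * Q)
                ≤ (C * (∑ p, |u p|) * (∑ p, |u p|)) * (ν S ^ N * ν Q) := by
                  refine mul_le_mul_of_nonneg_left (hgeom N Q) ?_
                  positivity
              _ = ((C * (∑ p, |u p|) * (∑ p, |u p|)) * ν Q) * ν S ^ N := by ring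
    have h := hlim (x * x) _ (l.length + 1) key
    exact mul_self_eq_zero.mp (le_antisymm h (mul_self_nonneg _))
  -- symmetry
  have hsymm : (psi Q)ᵀ = psi Q := by
    set sw : (Fin n × Fin n) ≃ (Fin n × Fin n) := Equiv.prodComm (Fin n) (Fin n) with hsw
    have hτ : (psi Q)ᵀ = psi (Q.submatrix sw sw) := rfl
    have hτS : S.submatrix ⇑sw ⇑sw = S := by
      ext p q
      show S (sw p) (sw q) = S p q
      rw [hSdef]
      simp only [Matrix.sum_apply, kroneckerMap_apply]
      exact Finset.sum_congr rfl fun i _ => by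
        simp [hsw, mul_comm]
    have hS' : ∀ p q, S (sw p) (sw q) = S p q := fun p q => congrFun (congrFun hτS p) q
    have h1 : (1 - S).submatrix ⇑sw ⇑sw = 1 - S := by
      ext p q
      show (1 - S) (sw p) (sw q) = (1 - S) p q
      simp only [Matrix.sub_apply, Matrix.one_apply, hS', EmbeddingLike.apply_eq_iff_eq]
    have h2 : Q.submatrix ⇑sw ⇑sw * (1 - S) = 1 := by
      calc Q.submatrix ⇑sw ⇑sw * (1 - S)
          = Q.submatrix ⇑sw ⇑sw * (1 - S).submatrix ⇑sw ⇑sw := by rw [h1]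
        _ = (Q * (1 - S)).submatrix ⇑sw ⇑sw := Matrix.submatrix_mul_equiv _ _ _ _ _
        _ = (1 : Matrix (Fin n × Fin n) (Fin n × Fin n) ℝ).submatrix ⇑sw ⇑sw := by
            rw [hQr]
        _ = 1 := Matrix.submatrix_one_equiv sw
    have hτQ : Q.submatrix ⇑sw ⇑sw = Q := by
      calc Q.submatrix ⇑sw ⇑sw = Q.submatrix ⇑sw ⇑sw * ((1 - S) * Q) := by
            rw [hQl, Matrix.mul_one]
        _ = (Q.submatrix ⇑sw ⇑sw * (1 - S)) * Q := by rw [Matrix.mul_assoc]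
        _ = Q := by rw [h2, Matrix.one_mul]
    rw [hτ, hτQ]
  have hdotsymm : ∀ u y : Fin n × Fin n → ℝ,
      y ⬝ᵥ (psi Q *ᵥ u) = u ⬝ᵥ (psi Q *ᵥ y) := by
    intro u y
    rw [Matrix.dotProduct_mulVec, ← Matrix.mulVec_transpose, hsymm,
      dotProduct_comm]
  set V : Submodule ℝ (Fin n × Fin n → ℝ) :=
    Submodule.span ℝ (Set.range fun l : List (Fin d) => _root_.vec (wprod X l)) with hVdef
  have hmapX : ∀ (L : List (Matrix (Fin n) (Fin n) ℝ)), (∀ y ∈ L, y ∈ Set.range X) →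
      ∃ l : List (Fin d), L = l.map X := by
    intro L
    induction L with
    | nil => exact fun _ => ⟨[], rfl⟩
    | cons a L ih =>
        intro h
        obtain ⟨l, hl⟩ := ih (fun y hy => h y (List.mem_cons_of_mem a hy))
        obtain ⟨i, hi⟩ := h a List.mem_cons_self
        exact ⟨i :: l, by rw [List.map_cons, hi, hl]⟩
  have hclosure : (Submonoid.closure (Set.range X) : Set (Matrix (Fin n) (Fin n) ℝ))
      = Set.range fun l : List (Fin d) => wprod X l := by
    ext x
    constructor
    · intro hx
      obtain ⟨L, hL, hprod⟩ := Submonoid.exists_list_of_mem_closure hx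
      obtain ⟨l, rfl⟩ := hmapX L hL
      exact ⟨l, hprod⟩
    · rintro ⟨l, rfl⟩
      refine Submonoid.list_prod_mem _ (fun y hy => ?_)
      obtain ⟨i, _, rfl⟩ := List.mem_map.mp hy
      exact Submonoid.subset_closure (Set.mem_range_self i)
  have hadj : Z ∈ Algebra.adjoin ℝ (Set.range X) ↔
      Z ∈ Submodule.span ℝ (Set.range fun l : List (Fin d) => wprod X l) := by
    rw [← Subalgebra.mem_toSubmodule, Algebra.adjoin_eq_span, hclosure]
  have hVmap : V = (Submodule.span ℝ (Set.range fun l : List (Fin d) => wprod X l)).map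
      (vecE (n := n)).toLinearMap := by
    rw [Submodule.map_span, hVdef]
    congr 1
    rw [← Set.range_comp]
    rfl
  have halg : Z ∈ Algebra.adjoin ℝ (Set.range X) ↔ _root_.vec Z ∈ V := by
    rw [hadj, hVmap]
    constructor
    · intro h
      exact ⟨Z, h, rfl⟩
    · rintro ⟨W, hW, hWZ⟩
      have : W = Z := vecE.injective hWZ
      rwa [this] at hW
  have hrange : LinearMap.range (psi Q).mulVecLin = V := by
    rw [hVdef]
    refine range_mulVecLin_eq_span (psi Q) _ hsymm ?_ ?_
    · intro u y hy
      exact hF1 u y fun l => hy _ (Set.mem_range_self l)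
    · rintro u hu g ⟨l, rfl⟩
      exact hF2 u hu l
  rw [halg, hrange]
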